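/- arXiv:2511.16157 — 4 statements merged into one kernel-verified Lean document; each statement's English description precedes it below -/
import Mathlib

section
/- If (v_j, ρ_j)_{j∈ℤ} is a nonnegative bounded stationary solution of the city-road system, then each v_j is an affine function v_j(x) = a_j x + b_j whose boundary values are determined by ρ via v_j(0) = (βd/(α(2d+α)))·(((d+α)/d)·ρ_j + ρ_{j+1}) and v_j(1) = (βd/(α(2d+α)))·(ρ_j + ((d+α)/d)·ρ_{j+1}), and the sequence (ρ_j)_{j∈ℤ} satisfies the discrete Fisher-KPP equation (βd/(2d+α))·(ρ_{j−1} − 2ρ_j + ρ_{j+1}) + f(ρ_j) = 0 for all j ∈ ℤ. -/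
open Set Filter Topology

noncomputable section

/-- A nonnegative bounded stationary solution of the city-road system: each `v j` is `C²`
on `[0,1]`, everything is uniformly bounded and nonnegative, `v j` is harmonic on `(0,1)`,
the logistic balance holds at each city, and the Robin boundary conditions hold. -/
def IsStationarySolution (α β d : ℝ) (f : ℝ → ℝ) (v : ℤ → ℝ → ℝ) (ρ : ℤ → ℝ) : Prop :=
  (∀ j, ContDiffOn ℝ 2 (v j) (Icc 0 1)) ∧
  (∃ C : ℝ, ∀ j, (∀ x ∈ Icc (0:ℝ) 1, |v j x| ≤ C) ∧ |ρ j| ≤ C) ∧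
  (∀ j, ∀ x ∈ Icc (0:ℝ) 1, 0 ≤ v j x) ∧ (∀ j, 0 ≤ ρ j) ∧
  (∀ j, ∀ x ∈ Ioo (0:ℝ) 1,
    d * derivWithin (derivWithin (v j) (Icc 0 1)) (Icc 0 1) x = 0) ∧
  (∀ j : ℤ, 0 = f (ρ j) + α * (v j 0 + v (j - 1) 1) - 2 * β * ρ j) ∧
  (∀ j : ℤ, -d * derivWithin (v j) (Icc 0 1) 0 + α * v j 0 = β * ρ j) ∧
  (∀ j : ℤ, d * derivWithin (v j) (Icc 0 1) 1 + α * v j 1 = β * ρ (j + 1))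

/-- A `C²` function on `[0,1]` whose second (interval) derivative vanishes on `(0,1)`
is affine, with slope equal to its interval derivative at both endpoints. -/
lemma affine_of_harmonic (d : ℝ) (hd : 0 < d) (vj : ℝ → ℝ)
    (hC2 : ContDiffOn ℝ 2 vj (Icc 0 1))
    (hharm : ∀ x ∈ Ioo (0:ℝ) 1,
      d * derivWithin (derivWithin vj (Icc 0 1)) (Icc 0 1) x = 0) :
    ∃ a : ℝ, (∀ x ∈ Icc (0:ℝ) 1, vj x = a * x + vj 0) ∧
      derivWithin vj (Icc 0 1) 0 = a ∧ derivWithin vj (Icc 0 1) 1 = a := by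
  have hud : UniqueDiffOn ℝ (Icc (0:ℝ) 1) := uniqueDiffOn_Icc zero_lt_one
  set g := derivWithin vj (Icc (0:ℝ) 1) with hg
  have hg1 : ContDiffOn ℝ 1 g (Icc 0 1) := hC2.derivWithin hud (by norm_num)
  set G := derivWithin g (Icc (0:ℝ) 1) with hG
  have hGzero : ∀ x ∈ Ioo (0:ℝ) 1, G x = 0 := fun x hx => by
    have := hharm x hx
    rcases mul_eq_zero.1 this with h | h
    · exact absurd h hd.ne'
    · exact h
  have hGcont : ContinuousOn G (Icc 0 1) := hg1.continuousOn_derivWithin hud le_rfl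
  have hne : (𝓝[Ioo (0:ℝ) 1] 0).NeBot := by
    refine mem_closure_iff_nhdsWithin_neBot.1 ?_
    rw [closure_Ioo one_ne_zero.symm]
    exact ⟨le_refl 0, zero_le_one⟩
  have hG0 : G 0 = 0 := by
    have t1 : Tendsto G (𝓝[Ioo (0:ℝ) 1] 0) (𝓝 (G 0)) :=
      (hGcont 0 (by constructor <;> norm_num)).mono_left
        (nhdsWithin_mono _ Ioo_subset_Icc_self)
    have t2 : Tendsto G (𝓝[Ioo (0:ℝ) 1] 0) (𝓝 0) := by
      refine Tendsto.congr' ?_ tendsto_const_nhds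
      filter_upwards [self_mem_nhdsWithin] with x hx
      exact (hGzero x hx).symm
    exact tendsto_nhds_unique t1 t2
  have hgconst : ∀ x ∈ Icc (0:ℝ) 1, g x = g 0 :=
    constant_of_derivWithin_zero (hg1.differentiableOn one_ne_zero)
      (fun x hx => by
        rcases eq_or_lt_of_le hx.1 with h | h
        · rw [← h]; exact hG0
        · exact hGzero x ⟨h, hx.2⟩)
  refine ⟨g 0, ?_, rfl, hgconst 1 (by constructor <;> norm_num)⟩
  have hdiffv : DifferentiableOn ℝ vj (Icc 0 1) := hC2.differentiableOn (by norm_num)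
  have key : ∀ x ∈ Icc (0:ℝ) 1, vj x - g 0 * x = vj 0 - g 0 * 0 := by
    apply constant_of_derivWithin_zero
    · exact hdiffv.sub ((differentiable_id.const_mul (g 0)).differentiableOn)
    · intro x hx
      have hx' : x ∈ Icc (0:ℝ) 1 := ⟨hx.1, hx.2.le⟩
      have h1 : HasDerivWithinAt vj (g x) (Icc 0 1) x :=
        (hdiffv x hx').hasDerivWithinAt
      have h2 : HasDerivWithinAt (fun y : ℝ => g 0 * y) (g 0) (Icc 0 1) x := by
        simpa using ((hasDerivAt_id x).const_mul (g 0)).hasDerivWithinAt (s := Icc 0 1)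
      have h3 : HasDerivWithinAt (fun y => vj y - g 0 * y) (g x - g 0) (Icc 0 1) x :=
        h1.sub h2
      rw [h3.derivWithin (hud x hx'), hgconst x hx', sub_self]
  intro x hx
  have := key x hx
  simp only [mul_zero, sub_zero] at this
  linarith

/-- **Structure of stationary solutions**: every nonnegative bounded stationary solution of
the city-road system has affine road profiles with boundary values determined by `ρ`, and
`ρ` solves the discrete Fisher-KPP equation. -/
theorem stationary_solutions_structure
    (α β d : ℝ) (hα : 0 < α) (hβ : 0 < β) (hd : 0 < d)
    (f : ℝ → ℝ) (hf : ContDiff ℝ 1 f) (hf0 : f 0 = 0) (hf1 : f 1 = 0)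
    (hfpos : ∀ u ∈ Ioo (0:ℝ) 1, 0 < f u ∧ f u ≤ deriv f 0 * u)
    (hfneg : ∀ u : ℝ, u ∉ Icc (0:ℝ) 1 → f u < 0)
    (v : ℤ → ℝ → ℝ) (ρ : ℤ → ℝ)
    (hstat : IsStationarySolution α β d f v ρ) :
    ∀ j : ℤ,
      (∃ a b : ℝ, ∀ x ∈ Icc (0:ℝ) 1, v j x = a * x + b) ∧
      v j 0 = β * d / (α * (2 * d + α)) * ((d + α) / d * ρ j + ρ (j + 1)) ∧
      v j 1 = β * d / (α * (2 * d + α)) * (ρ j + (d + α) / d * ρ (j + 1)) ∧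
      β * d / (2 * d + α) * (ρ (j - 1) - 2 * ρ j + ρ (j + 1)) + f (ρ j) = 0 := by
  obtain ⟨hC2, -, -, -, hharm, hbal, hR0, hR1⟩ := hstat
  have hαne : α ≠ 0 := hα.ne'
  have hdne : d ≠ 0 := hd.ne'
  have hsum : (2 * d + α) ≠ 0 := by positivity
  -- boundary values for every j
  have key : ∀ j : ℤ,
      (∃ a b : ℝ, ∀ x ∈ Icc (0:ℝ) 1, v j x = a * x + b) ∧
      α * (2 * d + α) * v j 0 = β * ((d + α) * ρ j + d * ρ (j + 1)) ∧
      α * (2 * d + α) * v j 1 = β * (d * ρ j + (d + α) * ρ (j + 1)) := by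
    intro j
    obtain ⟨a, haff, h0, h1⟩ := affine_of_harmonic d hd (v j) (hC2 j) (hharm j)
    have E0 : -d * a + α * v j 0 = β * ρ j := by rw [← h0]; exact hR0 j
    have E1 : d * a + α * v j 1 = β * ρ (j + 1) := by rw [← h1]; exact hR1 j
    have hv1 : v j 1 = a + v j 0 := by
      have := haff 1 ⟨zero_le_one, le_refl 1⟩
      linarith [this]
    have ha : (2 * d + α) * a = β * (ρ (j + 1) - ρ j) := by
      linear_combination E1 - E0 - α * hv1
    exact ⟨⟨a, v j 0, haff⟩,
      by linear_combination (2 * d + α) * E0 + d * ha,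
      by linear_combination (2 * d + α) * E1 - d * ha⟩
  intro j
  obtain ⟨haff, hv0, hv1⟩ := key j
  have hv1' := (key (j - 1)).2.2
  rw [sub_add_cancel] at hv1'
  refine ⟨haff, ?_, ?_, ?_⟩
  · field_simp
    linear_combination hv0
  · field_simp
    linear_combination hv1
  · have hb := hbal j
    have h1 : α * (β * d * (ρ (j - 1) - 2 * ρ j + ρ (j + 1)) + (2 * d + α) * f (ρ j)) =
        α * 0 := by
      linear_combination -α * (2 * d + α) * hb - α * hv0 - α * hv1'
    have h2 : β * d * (ρ (j - 1) - 2 * ρ j + ρ (j + 1)) + (2 * d + α) * f (ρ j) = 0 :=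
      mul_left_cancel₀ hαne h1
    field_simp
    linear_combination h2
end
end

section
/- The only bounded nonnegative sequences (ρ_j)_{j∈ℤ} satisfying the discrete Fisher-KPP equation (βd/(2d+α))·(ρ_{j−1} − 2ρ_j + ρ_{j+1}) + f(ρ_j) = 0 for all j ∈ ℤ are the constant sequences ρ_j ≡ 0 and ρ_j ≡ 1. -/
open Set Filter

noncomputable section

/-- **Classification of bounded nonnegative solutions of the discrete Fisher-KPP equation**:
the only bounded nonnegative sequences `(ρ_j)` with
`(βd/(2d+α))(ρ_{j-1} - 2ρ_j + ρ_{j+1}) + f(ρ_j) = 0` for all `j` are `ρ ≡ 0` and `ρ ≡ 1`. -/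
theorem discrete_fisher_kpp_stationary
    (α β d : ℝ) (hα : 0 < α) (hβ : 0 < β) (hd : 0 < d)
    (f : ℝ → ℝ) (hf : ContDiff ℝ 1 f) (hf0 : f 0 = 0) (hf1 : f 1 = 0)
    (hfpos : ∀ u ∈ Ioo (0:ℝ) 1, 0 < f u ∧ f u ≤ deriv f 0 * u)
    (hfneg : ∀ u : ℝ, u ∉ Icc (0:ℝ) 1 → f u < 0)
    (ρ : ℤ → ℝ)
    (hbdd : ∃ C : ℝ, ∀ j, |ρ j| ≤ C)
    (hpos : ∀ j, 0 ≤ ρ j)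
    (heq : ∀ j : ℤ, β * d / (2 * d + α) * (ρ (j - 1) - 2 * ρ j + ρ (j + 1)) + f (ρ j) = 0) :
    (∀ j, ρ j = 0) ∨ (∀ j, ρ j = 1) := by
  obtain ⟨C, hC⟩ := hbdd
  set k : ℝ := β * d / (2 * d + α) with hk_def
  have hk : 0 < k := by
    rw [hk_def]; exact div_pos (mul_pos hβ hd) (by linarith)
  have hne : (Set.range ρ).Nonempty := ⟨ρ 0, 0, rfl⟩
  have hbddA : BddAbove (Set.range ρ) := ⟨C, by rintro x ⟨j, rfl⟩; exact (abs_le.mp (hC j)).2⟩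
  set M := sSup (Set.range ρ) with hM_def
  have hM : ∀ j, ρ j ≤ M := fun j => le_csSup hbddA ⟨j, rfl⟩
  -- Step 1: ρ ≤ 1
  have hle1 : ∀ j, ρ j ≤ 1 := by
    suffices hM1 : M ≤ 1 by intro j; exact (hM j).trans hM1
    by_contra h1
    push_neg at h1
    have hIcc : ((M + 1) / 2 : ℝ) ≤ M := by linarith
    obtain ⟨u₀, hu₀, hmax⟩ := isCompact_Icc.exists_isMaxOn (Set.nonempty_Icc.mpr hIcc)
      (hf.continuous.continuousOn)
    set δ := -f u₀ with hδ_def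
    have hu₀1 : 1 < u₀ := by have := hu₀.1; linarith
    have hδ : 0 < δ := by
      have := hfneg u₀ (by intro h; have := h.2; linarith)
      simp only [hδ_def]; linarith
    set q := δ / (2 * k) with hq_def
    have hq : 0 < q := by positivity
    have hδq : δ = 2 * k * q := by
      rw [hq_def]; field_simp
    set η := min ((M - 1) / 2) q with hη_def
    have hη : 0 < η := lt_min (by linarith) hq
    have hηq : η ≤ q := min_le_right _ _
    have hηM : η ≤ (M - 1) / 2 := min_le_left _ _
    have claim : ∀ n : ℕ, ∃ j, M - η + n * q ≤ ρ j := by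
      intro n; induction n with
      | zero =>
        obtain ⟨x, hx, hxlt⟩ := exists_lt_of_lt_csSup hne (show M - η < M by linarith)
        obtain ⟨j, rfl⟩ := hx
        exact ⟨j, by push_cast; linarith⟩
      | succ n ih =>
        obtain ⟨j, hj⟩ := ih
        have hn0 : (0:ℝ) ≤ (n:ℝ) * q := by positivity
        have hjlo : M - η ≤ ρ j := by linarith
        have hjI : ρ j ∈ Set.Icc ((M + 1) / 2) M := ⟨by linarith, hM j⟩
        have hfj : f (ρ j) ≤ -δ := by
          have h5 : f (ρ j) ≤ f u₀ := hmax hjI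
          rw [hδ_def]; linarith
        have e := heq j
        have h2 : ρ (j - 1) ≤ M := hM _
        have h3 : k * (2 * q) ≤ k * (ρ (j - 1) - 2 * ρ j + ρ (j + 1)) := by
          nlinarith
        have h4 : (2 * q : ℝ) ≤ ρ (j - 1) - 2 * ρ j + ρ (j + 1) :=
          le_of_mul_le_mul_left h3 hk
        refine ⟨j + 1, ?_⟩
        push_cast
        linarith
    obtain ⟨n, hn⟩ := exists_nat_gt (η / q)
    obtain ⟨j, hj⟩ := claim n
    have hgt : η < n * q := (div_lt_iff₀ hq).mp hn
    have := hM j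
    linarith
  -- Step 2: f(ρ j) ≥ 0
  have hfnn : ∀ j, 0 ≤ f (ρ j) := by
    intro j
    rcases eq_or_lt_of_le (hpos j) with h0 | h0
    · rw [← h0, hf0]
    rcases eq_or_lt_of_le (hle1 j) with h1 | h1
    · rw [h1, hf1]
    · exact (hfpos _ ⟨h0, h1⟩).1.le
  -- Step 3: concavity
  have hconc : ∀ j : ℤ, ρ (j + 1) - ρ j ≤ ρ j - ρ (j - 1) := by
    intro j
    have e := heq j
    have h3 : k * (ρ (j - 1) - 2 * ρ j + ρ (j + 1)) ≤ k * 0 := by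
      rw [mul_zero]; linarith [hfnn j]
    have := le_of_mul_le_mul_left h3 hk
    linarith
  have monoL : ∀ n : ℕ, ∀ j : ℤ, ρ (j + 1) - ρ j ≤ ρ (j - n + 1) - ρ (j - n) := by
    intro n; induction n with
    | zero => intro j; simp
    | succ n ih =>
      intro j
      have h1 := ih j
      have h2 := hconc (j - n)
      have e1 : (j - ((n : ℤ) + 1) + 1 : ℤ) = j - n := by ring
      have e2 : (j - ((n : ℤ) + 1) : ℤ) = j - n - 1 := by ring
      push_cast
      rw [e1, e2]
      linarith
  have monoR : ∀ n : ℕ, ∀ j : ℤ, ρ (j + n + 1) - ρ (j + n) ≤ ρ (j + 1) - ρ j := by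
    intro n; induction n with
    | zero => intro j; simp
    | succ n ih =>
      intro j
      have h1 := ih j
      have h2 := hconc (j + n + 1)
      have e1 : (j + ((n : ℤ) + 1) + 1 : ℤ) = j + (n : ℤ) + 1 + 1 := by ring
      have e2 : (j + (n : ℤ) + 1 - 1 : ℤ) = j + n := by ring
      have e3 : (j + ((n : ℤ) + 1) : ℤ) = j + (n : ℤ) + 1 := by ring
      rw [e2] at h2
      push_cast
      rw [e1, e3]
      linarith [h2]
  have lower : ∀ n : ℕ, ∀ j : ℤ, (n : ℝ) * (ρ (j + 1) - ρ j) ≤ ρ j - ρ (j - n) := by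
    intro n; induction n with
    | zero => intro j; simp
    | succ n ih =>
      intro j
      have h1 := ih j
      have h2 := monoL (n + 1) j
      have e1 : (j - ((n : ℤ) + 1) + 1 : ℤ) = j - n := by ring
      push_cast at h2 ⊢
      rw [e1] at h2
      linarith
  have upper : ∀ n : ℕ, ∀ j : ℤ, ρ (j + n) - ρ j ≤ (n : ℝ) * (ρ (j + 1) - ρ j) := by
    intro n; induction n with
    | zero => intro j; simp
    | succ n ih =>
      intro j
      have h1 := ih j
      have h2 := monoR n j
      push_cast at h2 ⊢
      have e1 : (j + ((n : ℤ) + 1) : ℤ) = j + n + 1 := by ring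
      rw [e1]
      linarith
  -- Step 4: ρ is constant
  have hstep : ∀ j : ℤ, ρ (j + 1) = ρ j := by
    intro j
    by_contra hne'
    have hg : ρ (j + 1) - ρ j ≠ 0 := sub_ne_zero.mpr hne'
    rcases hg.lt_or_gt with hneg | hposg
    · -- g < 0 : go right
      set g := ρ (j + 1) - ρ j with hg_def
      obtain ⟨n, hn⟩ := exists_nat_gt (1 / (-g))
      have hng : 1 < (n : ℝ) * (-g) := by
        rw [div_lt_iff₀ (by linarith)] at hn; linarith
      have h1 := upper n j
      have h2 := hpos (j + n)
      have h3 := hle1 j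
      nlinarith
    · -- g > 0 : go left
      set g := ρ (j + 1) - ρ j with hg_def
      obtain ⟨n, hn⟩ := exists_nat_gt (1 / g)
      have hng : 1 < (n : ℝ) * g := by
        rw [div_lt_iff₀ hposg] at hn; linarith
      have h1 := lower n j
      have h2 := hpos (j - n)
      have h3 := hle1 j
      nlinarith
  have hconst : ∀ j : ℤ, ρ j = ρ 0 := by
    intro j
    induction j using Int.induction_on with
    | zero => rfl
    | succ n ih => rw [hstep (n : ℤ)]; exact ih
    | pred n ih =>
      have h := hstep (-(n : ℤ) - 1)
      have e : (-(n : ℤ) - 1 + 1 : ℤ) = -(n : ℤ) := by ring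
      rw [e] at h
      rw [← h]; exact ih
  -- Step 5: conclude
  have hfc : f (ρ 0) = 0 := by
    have e := heq 0
    rw [hconst (0 - 1), hconst (0 + 1)] at e
    linear_combination e
  rcases eq_or_lt_of_le (hpos 0) with h0 | h0
  · left; intro j; rw [hconst j, ← h0]
  rcases eq_or_lt_of_le (hle1 0) with h1 | h1
  · right; intro j; rw [hconst j, h1]
  · exact absurd hfc (ne_of_gt (hfpos _ ⟨h0, h1⟩).1)
end
end

section
/- The only nonnegative bounded stationary solutions of the asymptotic system, i.e. bounded sequences (V_j, P_j)_{j∈ℤ} of nonnegative reals satisfying 0 = −2α V_j + β(P_j + P_{j+1}) and 0 = f(P_j) + α(V_j + V_{j-1}) − 2β P_j for all j ∈ ℤ, are (V_j, P_j) ≡ (0, 0) and (V_j, P_j) ≡ (β/α, 1). -/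
open Set Filter

noncomputable section

private lemma srec_of_rec {β : ℝ} {f : ℝ → ℝ} {Q : ℤ → ℝ}
    (rec : ∀ j : ℤ, 2 * f (Q j) + β * (Q (j+1) + Q (j-1) - 2 * Q j) = 0) :
    ∀ j : ℤ, β * (Q (j+1) - Q j) = β * (Q j - Q (j-1)) + (-2) * f (Q j) := by
  intro j
  linear_combination rec j

private lemma no_sup_gt_one (β C : ℝ) (hβ : 0 < β) (f : ℝ → ℝ)
    (hfneg : ∀ u : ℝ, 1 < u → f u < 0)
    (Q : ℤ → ℝ) (hbdd : ∀ j, Q j ≤ C)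
    (rec : ∀ j : ℤ, 2 * f (Q j) + β * (Q (j+1) + Q (j-1) - 2 * Q j) = 0)
    (j0 : ℤ) (h1 : 1 < Q j0) (h2 : Q j0 ≤ Q (j0+1)) : False := by
  have srec := srec_of_rec rec
  have hQ1 : 1 < Q (j0+1) := lt_of_lt_of_le h1 h2
  set e : ℝ := (-2) * f (Q (j0+1)) with he
  have hepos : 0 < e := by have := hfneg _ hQ1; nlinarith
  have key : ∀ n : ℕ, β * Q (j0 + 1 + (n:ℤ)) ≥ β * Q (j0+1) + (n:ℝ) * e ∧
      β * (Q (j0 + 1 + (n:ℤ) + 1) - Q (j0 + 1 + (n:ℤ))) ≥ e := by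
    intro n
    induction n with
    | zero =>
      constructor
      · norm_num
      · have hs := srec (j0 + 1)
        have h0 : (j0 + 1 : ℤ) - 1 = j0 := by ring
        rw [h0] at hs
        have hnn : 0 ≤ β * (Q (j0+1) - Q j0) := by nlinarith
        have hi : (j0 + 1 + ((0:ℕ):ℤ) : ℤ) = j0 + 1 := by norm_num
        rw [hi]
        linarith [hs]
    | succ n ih =>
      obtain ⟨ihQ, ihS⟩ := ih
      have hidx : (j0 + 1 + ((n+1:ℕ):ℤ) : ℤ) = j0 + 1 + (n:ℤ) + 1 := by push_cast; ring
      have hcast : ((n+1:ℕ):ℝ) = (n:ℝ) + 1 := by push_cast; ring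
      have hQnew : β * Q (j0 + 1 + ((n+1:ℕ):ℤ)) ≥ β * Q (j0+1) + ((n:ℝ)+1) * e := by
        rw [hidx]; nlinarith
      have hQnew1 : 1 < Q (j0 + 1 + ((n+1:ℕ):ℤ)) := by
        have h1' : β * 1 < β * Q (j0 + 1 + ((n+1:ℕ):ℤ)) := by nlinarith
        exact (mul_lt_mul_iff_right₀ hβ).mp h1'
      refine ⟨by rw [hcast]; exact hQnew, ?_⟩
      have hs := srec (j0 + 1 + ((n+1:ℕ):ℤ))
      have h0 : (j0 + 1 + ((n+1:ℕ):ℤ) : ℤ) - 1 = j0 + 1 + (n:ℤ) := by push_cast; ring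
      rw [h0] at hs
      have hfn := hfneg _ hQnew1
      rw [hidx] at hs hfn ⊢
      linarith
  obtain ⟨n, hn⟩ := exists_nat_gt ((β * C - β * Q (j0+1)) / e)
  have h3 := (key n).1
  have h4 : β * Q (j0 + 1 + (n:ℤ)) ≤ β * C := by
    have := hbdd (j0 + 1 + (n:ℤ)); nlinarith
  have h5 : (β * C - β * Q (j0+1)) < (n:ℝ) * e := by
    rw [div_lt_iff₀ hepos] at hn; linarith
  linarith

private lemma no_decrease (β : ℝ) (hβ : 0 < β) (f : ℝ → ℝ)
    (hfnn : ∀ u : ℝ, 0 ≤ u → u ≤ 1 → 0 ≤ f u)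
    (Q : ℤ → ℝ) (hlow : ∀ j, 0 ≤ Q j) (hup : ∀ j, Q j ≤ 1)
    (rec : ∀ j : ℤ, 2 * f (Q j) + β * (Q (j+1) + Q (j-1) - 2 * Q j) = 0)
    (j0 : ℤ) (hS : Q (j0+1) < Q j0) : False := by
  have srec := srec_of_rec rec
  set s : ℝ := β * (Q (j0+1) - Q j0) with hs0
  have hsneg : s < 0 := by nlinarith
  have key : ∀ n : ℕ, β * (Q (j0 + (n:ℤ) + 1) - Q (j0 + (n:ℤ))) ≤ s ∧
      β * Q (j0 + 1 + (n:ℤ)) ≤ β * Q (j0+1) + (n:ℝ) * s := by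
    intro n
    induction n with
    | zero =>
      constructor
      · have hi : (j0 + ((0:ℕ):ℤ) : ℤ) = j0 := by norm_num
        rw [hi]
      · norm_num
    | succ n ih =>
      obtain ⟨ihS, ihQ⟩ := ih
      have hSnew : β * (Q (j0 + ((n+1:ℕ):ℤ) + 1) - Q (j0 + ((n+1:ℕ):ℤ))) ≤ s := by
        have hs1 := srec (j0 + ((n+1:ℕ):ℤ))
        have h0 : (j0 + ((n+1:ℕ):ℤ) : ℤ) - 1 = j0 + (n:ℤ) := by push_cast; ring
        rw [h0] at hs1
        have hf1 := hfnn (Q (j0 + ((n+1:ℕ):ℤ))) (hlow _) (hup _)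
        have h1 : (j0 + ((n+1:ℕ):ℤ) : ℤ) = j0 + (n:ℤ) + 1 := by push_cast; ring
        rw [h1] at hs1 hf1 ⊢
        linarith
      refine ⟨hSnew, ?_⟩
      have h2 : (j0 + 1 + ((n+1:ℕ):ℤ) : ℤ) = j0 + ((n+1:ℕ):ℤ) + 1 := by push_cast; ring
      have h3 : (j0 + ((n+1:ℕ):ℤ) : ℤ) = j0 + 1 + (n:ℤ) := by push_cast; ring
      rw [h3] at hSnew
      have hcast : ((n+1:ℕ):ℝ) = (n:ℝ) + 1 := by push_cast; ring
      rw [h2, h3, hcast]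
      linarith
  obtain ⟨n, hn⟩ := exists_nat_gt ((β * Q (j0+1)) / (-s))
  have h3 := (key n).2
  have h4 : 0 ≤ β * Q (j0 + 1 + (n:ℤ)) := by
    have := hlow (j0 + 1 + (n:ℤ)); positivity
  have h5 : β * Q (j0+1) < (n:ℝ) * (-s) := by
    rw [div_lt_iff₀ (by linarith : (0:ℝ) < -s)] at hn; linarith
  nlinarith

/-- **Stationary solutions of the asymptotic system**: the only nonnegative bounded
sequences satisfying `0 = −2αV_j + β(P_j + P_{j+1})` and
`0 = f(P_j) + α(V_j + V_{j−1}) − 2βP_j` are `(0,0)` and `(β/α, 1)`. -/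
theorem asymptotic_stationary_classification
    (α β : ℝ) (hα : 0 < α) (hβ : 0 < β)
    (f : ℝ → ℝ) (hf : ContDiff ℝ 1 f) (hf0 : f 0 = 0) (hf1 : f 1 = 0)
    (hfpos : ∀ u ∈ Ioo (0:ℝ) 1, 0 < f u ∧ f u ≤ deriv f 0 * u)
    (hfneg : ∀ u : ℝ, u ∉ Icc (0:ℝ) 1 → f u < 0)
    (V P : ℤ → ℝ)
    (hbdd : ∃ C : ℝ, ∀ j, |V j| ≤ C ∧ |P j| ≤ C)
    (hpos : ∀ j, 0 ≤ V j ∧ 0 ≤ P j)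
    (heqV : ∀ j : ℤ, 0 = -(2 * α) * V j + β * (P j + P (j + 1)))
    (heqP : ∀ j : ℤ, 0 = f (P j) + α * (V j + V (j - 1)) - 2 * β * P j) :
    (∀ j, V j = 0 ∧ P j = 0) ∨ (∀ j, V j = β / α ∧ P j = 1) := by
  -- derive the second-order recurrence for P
  have hrec : ∀ j : ℤ, 2 * f (P j) + β * (P (j+1) + P (j-1) - 2 * P j) = 0 := by
    intro j
    have h1 := heqV j
    have h2 := heqV (j-1)
    have h3 := heqP j
    have h4 : (j - 1 + 1 : ℤ) = j := by ring
    rw [h4] at h2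
    linarith
  have hfneg' : ∀ u : ℝ, 1 < u → f u < 0 := by
    intro u hu
    exact hfneg u (fun hm => absurd hm.2 (not_le.mpr hu))
  have hfnn : ∀ u : ℝ, 0 ≤ u → u ≤ 1 → 0 ≤ f u := by
    intro u h0 h1
    rcases h0.eq_or_lt with h | h
    · rw [← h, hf0]
    rcases h1.eq_or_lt with h' | h'
    · rw [h', hf1]
    · exact le_of_lt (hfpos u ⟨h, h'⟩).1
  obtain ⟨C, hC⟩ := hbdd
  have hPC : ∀ j, P j ≤ C := fun j => (abs_le.mp (hC j).2).2
  have hP0 : ∀ j, 0 ≤ P j := fun j => (hpos j).2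
  -- reflection lemma: reflected sequence satisfies the same recurrence
  have recR : ∀ c : ℤ, ∀ j : ℤ,
      2 * f (P (c - j)) + β * (P (c - (j+1)) + P (c - (j-1)) - 2 * P (c - j)) = 0 := by
    intro c j
    have h := hrec (c - j)
    have e1 : (c - (j+1) : ℤ) = (c - j) - 1 := by ring
    have e2 : (c - (j-1) : ℤ) = (c - j) + 1 := by ring
    rw [e1, e2]
    linarith
  -- Step 1: P j ≤ 1 everywhere
  have hub : ∀ j, P j ≤ 1 := by
    by_contra h
    push_neg at h
    obtain ⟨j0, hj0⟩ := h
    rcases le_or_gt (P j0) (P (j0+1)) with hle | hlt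
    · exact no_sup_gt_one β C hβ f hfneg' P hPC hrec j0 hj0 hle
    · -- then P (j0-1) ≥ P j0; reflect
      have hs := srec_of_rec hrec j0
      have hfn := hfneg' _ hj0
      have hge : P j0 ≤ P (j0 - 1) := by nlinarith
      have recQ : ∀ j : ℤ, 2 * f ((fun j => P (j0 - j)) j) +
          β * ((fun j => P (j0 - j)) (j+1) + (fun j => P (j0 - j)) (j-1)
            - 2 * (fun j => P (j0 - j)) j) = 0 := by
        intro j; exact recR j0 j
      have h1 : 1 < (fun j => P (j0 - j)) 0 := by simpa using hj0
      have h2 : (fun j => P (j0 - j)) 0 ≤ (fun j => P (j0 - j)) (0+1) := by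
        simpa using hge
      exact no_sup_gt_one β C hβ f hfneg' (fun j => P (j0 - j)) (fun j => hPC _)
        recQ 0 h1 h2
  -- Step 2: P is constant
  have hconst : ∀ j : ℤ, P (j+1) = P j := by
    intro j
    by_contra hne
    rcases lt_or_gt_of_ne hne with hlt | hgt
    · exact no_decrease β hβ f hfnn P hP0 hub hrec j hlt
    · -- reflect around j+1
      have recQ : ∀ i : ℤ, 2 * f ((fun i => P (j+1 - i)) i) +
          β * ((fun i => P (j+1 - i)) (i+1) + (fun i => P (j+1 - i)) (i-1)
            - 2 * (fun i => P (j+1 - i)) i) = 0 := by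
        intro i; exact recR (j+1) i
      have hS : (fun i => P (j+1 - i)) (0+1) < (fun i => P (j+1 - i)) 0 := by
        simp only [zero_add, sub_zero]
        have : (j + 1 - 1 : ℤ) = j := by ring
        rw [this]
        exact hgt
      exact no_decrease β hβ f hfnn (fun i => P (j+1 - i)) (fun i => hP0 _)
        (fun i => hub _) recQ 0 hS
  have hPall : ∀ j : ℤ, P j = P 0 := by
    intro j
    induction j using Int.induction_on with
    | zero => rfl
    | succ i ih => rw [hconst i, ih]
    | pred i ih =>
      have := hconst (-(i:ℤ) - 1)
      have h1 : (-(i:ℤ) - 1 + 1 : ℤ) = -(i:ℤ) := by ring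
      rw [h1] at this
      rw [← this]
      exact ih
  -- f (P 0) = 0
  have hfP0 : f (P 0) = 0 := by
    have h := hrec 0
    have h1 : ((0:ℤ)+1) = 1 := by norm_num
    have h2 : ((0:ℤ)-1) = -1 := by norm_num
    rw [h1, h2, hPall 1, hPall (-1)] at h
    linarith
  have hcases : P 0 = 0 ∨ P 0 = 1 := by
    rcases (hP0 0).eq_or_lt with h | h
    · exact Or.inl h.symm
    rcases (hub 0).eq_or_lt with h' | h'
    · exact Or.inr h'
    · exact absurd hfP0 (ne_of_gt (hfpos (P 0) ⟨h, h'⟩).1)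
  rcases hcases with h | h
  · left
    intro j
    have hPj : P j = 0 := by rw [hPall j, h]
    have hPj1 : P (j+1) = 0 := by rw [hPall (j+1), h]
    have hv := heqV j
    rw [hPj, hPj1] at hv
    have hVj : V j = 0 := by
      have h2 : (2 * α) * V j = 0 := by linarith
      rcases mul_eq_zero.mp h2 with h3 | h3
      · exact absurd h3 (by positivity)
      · exact h3
    exact ⟨hVj, hPj⟩
  · right
    intro j
    have hPj : P j = 1 := by rw [hPall j, h]
    have hPj1 : P (j+1) = 1 := by rw [hPall (j+1), h]
    have hv := heqV j
    rw [hPj, hPj1] at hv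
    have hVj : V j = β / α := by
      rw [eq_div_iff hα.ne']
      linear_combination (1/2 : ℝ) * hv
    exact ⟨hVj, hPj⟩
end
end

section
/- Let (W_j)_{j∈ℤ} and (Q_j)_{j∈ℤ} be families of C¹ functions on [0,∞) satisfying, for all t > 0 and j ∈ ℤ: W_j'(t) ≥ −2α W_j(t) + β(Q_j(t) + Q_{j+1}(t)) and Q_j'(t) ≥ c_j(t) Q_j(t) + α(W_j(t) + W_{j-1}(t)), where the coefficients satisfy sup_{t>0} sup_{j∈ℤ} |c_j(t)| < ∞, and assume W and Q are locally bounded in time. If W_j(0) ≥ 0 and Q_j(0) ≥ 0 for all j ∈ ℤ, then W_j(t) ≥ 0 and Q_j(t) ≥ 0 for all t > 0 and j ∈ ℤ. If, in addition, W(0) ≢ 0 or Q(0) ≢ 0, then W_j(t) > 0 and Q_j(t) > 0 for all t > 0 and j ∈ ℤ. -/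
open Set Filter Topology

private lemma myMono {f f' : ℝ → ℝ} {a b : ℝ}
    (hf : ContinuousOn f (Icc a b))
    (hd : ∀ x ∈ Ioo a b, HasDerivAt f (f' x) x)
    (h0 : ∀ x ∈ Ioo a b, 0 ≤ f' x) : MonotoneOn f (Icc a b) := by
  apply monotoneOn_of_deriv_nonneg (convex_Icc a b) hf
  · intro x hx
    rw [interior_Icc] at hx
    exact (hd x hx).differentiableAt.differentiableWithinAt
  · intro x hx
    rw [interior_Icc] at hx
    rw [(hd x hx).deriv]
    exact h0 x hx

private lemma myStrictMono {f f' : ℝ → ℝ} {a b : ℝ}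
    (hf : ContinuousOn f (Icc a b))
    (hd : ∀ x ∈ Ioo a b, HasDerivAt f (f' x) x)
    (h0 : ∀ x ∈ Ioo a b, 0 < f' x) : StrictMonoOn f (Icc a b) := by
  apply strictMonoOn_of_deriv_pos (convex_Icc a b) hf
  intro x hx
  rw [interior_Icc] at hx
  rw [(hd x hx).deriv]
  exact h0 x hx

private lemma expDeriv (k x : ℝ) :
    HasDerivAt (fun r => Real.exp (k * r)) (k * Real.exp (k * x)) x := by
  have h1 : HasDerivAt (fun r : ℝ => k * r) k x := by
    simpa using (hasDerivAt_id x).const_mul k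
  exact ((Real.hasDerivAt_exp (k * x)).comp x h1).congr_deriv (mul_comm _ _)

private lemma pos_of_exp_mono {u : ℝ → ℝ} {k a t : ℝ} (hat : a < t)
    (hu : ContinuousOn u (Icc a t))
    (hud : ∀ x ∈ Ioo a t, HasDerivAt u (deriv u x) x)
    (hge : ∀ x ∈ Ioo a t, 0 < k * u x + deriv u x)
    (hua : 0 ≤ u a) : 0 < u t := by
  have hsm : StrictMonoOn (fun r => Real.exp (k * r) * u r) (Icc a t) := by
    apply myStrictMono (f' := fun x => k * Real.exp (k * x) * u x + Real.exp (k * x) * deriv u x)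
    · exact ((Real.continuous_exp.comp (continuous_const.mul continuous_id)).continuousOn).mul hu
    · intro x hx
      exact (expDeriv k x).mul (hud x hx)
    · intro x hx
      have h1 := hge x hx
      have h2 := Real.exp_pos (k * x)
      nlinarith
  have h5 := hsm ⟨le_rfl, hat.le⟩ ⟨hat.le, le_rfl⟩ hat
  have h3 : 0 ≤ Real.exp (k * a) * u a := mul_nonneg (Real.exp_pos _).le hua
  have h4 : 0 < Real.exp (k * t) * u t := lt_of_le_of_lt h3 h5
  by_contra h6
  push_neg at h6
  nlinarith [Real.exp_pos (k * t)]

private lemma pos_of_exp_mono' {u : ℝ → ℝ} {k a t : ℝ} (hat : a ≤ t)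
    (hu : ContinuousOn u (Icc a t))
    (hud : ∀ x ∈ Ioo a t, HasDerivAt u (deriv u x) x)
    (hge : ∀ x ∈ Ioo a t, 0 ≤ k * u x + deriv u x)
    (hua : 0 < u a) : 0 < u t := by
  rcases eq_or_lt_of_le hat with h | h
  · rwa [← h]
  have hsm : MonotoneOn (fun r => Real.exp (k * r) * u r) (Icc a t) := by
    apply myMono (f' := fun x => k * Real.exp (k * x) * u x + Real.exp (k * x) * deriv u x)
    · exact ((Real.continuous_exp.comp (continuous_const.mul continuous_id)).continuousOn).mul hu
    · intro x hx
      exact (expDeriv k x).mul (hud x hx)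
    · intro x hx
      have h1 := hge x hx
      have h2 := Real.exp_pos (k * x)
      nlinarith
  have h5 := hsm ⟨le_rfl, h.le⟩ ⟨h.le, le_rfl⟩ h.le
  have h3 : 0 < Real.exp (k * a) * u a := mul_pos (Real.exp_pos _) hua
  have h4 : 0 < Real.exp (k * t) * u t := lt_of_lt_of_le h3 h5
  by_contra h6
  push_neg at h6
  nlinarith [Real.exp_pos (k * t)]

set_option maxHeartbeats 1000000 in
/-- **Positivity principle for the asymptotic system** (Proposition B.5): families of `C¹`
functions `(W,Q)` satisfying the differential inequalities of the asymptotic system with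
uniformly bounded coefficients `c_j(t)` and nonnegative initial data remain nonnegative, and
become positive for positive times if the initial data is not identically zero. -/
theorem asymptotic_positivity_principle
    (α β : ℝ) (hα : 0 < α) (hβ : 0 < β)
    (W Q : ℤ → ℝ → ℝ) (c : ℤ → ℝ → ℝ)
    (hreg : ∀ j, ContDiffOn ℝ 1 (W j) (Ici 0) ∧ ContDiffOn ℝ 1 (Q j) (Ici 0))
    (hc : ∃ C : ℝ, ∀ t : ℝ, 0 < t → ∀ j : ℤ, |c j t| ≤ C)
    (hloc : ∀ T : ℝ, 0 < T → ∃ C : ℝ, ∀ j, ∀ t ∈ Icc (0:ℝ) T, |W j t| ≤ C ∧ |Q j t| ≤ C)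
    (hineqW : ∀ j : ℤ, ∀ t : ℝ, 0 < t →
      -(2 * α) * W j t + β * (Q j t + Q (j + 1) t) ≤ deriv (W j) t)
    (hineqQ : ∀ j : ℤ, ∀ t : ℝ, 0 < t →
      c j t * Q j t + α * (W j t + W (j - 1) t) ≤ deriv (Q j) t)
    (hinit : ∀ j, 0 ≤ W j 0 ∧ 0 ≤ Q j 0) :
    (∀ j, ∀ t : ℝ, 0 < t → 0 ≤ W j t ∧ 0 ≤ Q j t) ∧
    (((∃ j, W j 0 ≠ 0) ∨ (∃ j, Q j 0 ≠ 0)) →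
      ∀ j, ∀ t : ℝ, 0 < t → 0 < W j t ∧ 0 < Q j t) := by
  obtain ⟨C, hC⟩ := hc
  have hC0 : 0 ≤ C := le_trans (abs_nonneg _) (hC 1 one_pos 0)
  have hWd : ∀ (j : ℤ) (t : ℝ), 0 < t → HasDerivAt (W j) (deriv (W j) t) t := by
    intro j t ht
    have h1 : DifferentiableWithinAt ℝ (W j) (Ici 0) t :=
      ((hreg j).1.differentiableOn one_ne_zero) t (le_of_lt ht)
    exact (h1.differentiableAt (Ici_mem_nhds ht)).hasDerivAt
  have hQd : ∀ (j : ℤ) (t : ℝ), 0 < t → HasDerivAt (Q j) (deriv (Q j) t) t := by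
    intro j t ht
    have h1 : DifferentiableWithinAt ℝ (Q j) (Ici 0) t :=
      ((hreg j).2.differentiableOn one_ne_zero) t (le_of_lt ht)
    exact (h1.differentiableAt (Ici_mem_nhds ht)).hasDerivAt
  have hWc : ∀ j, ContinuousOn (W j) (Ici 0) := fun j => (hreg j).1.continuousOn
  have hQc : ∀ j, ContinuousOn (Q j) (Ici 0) := fun j => (hreg j).2.continuousOn
  have keyT : ∀ T : ℝ, 0 < T → ∀ j, ∀ s ∈ Icc (0:ℝ) T, 0 ≤ W j s ∧ 0 ≤ Q j s := by
    intro T hT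
    obtain ⟨CT, hCT⟩ := hloc T hT
    have hCT0 : 0 ≤ CT := le_trans (abs_nonneg _) (hCT 0 0 ⟨le_rfl, hT.le⟩).1
    set M : ℝ := (2*α + 2*β + C) * CT with hMdef
    have hM0 : 0 ≤ M := by
      rw [hMdef]; exact mul_nonneg (by linarith) hCT0
    have habsW : ∀ j, ∀ x ∈ Icc (0:ℝ) T, -CT ≤ W j x ∧ W j x ≤ CT :=
      fun j x hx => abs_le.mp (hCT j x hx).1
    have habsQ : ∀ j, ∀ x ∈ Icc (0:ℝ) T, -CT ≤ Q j x ∧ Q j x ≤ CT :=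
      fun j x hx => abs_le.mp (hCT j x hx).2
    have hcrW : ∀ j, ∀ x ∈ Ioo (0:ℝ) T, -M ≤ deriv (W j) x := by
      intro j x hx
      have h1 := hineqW j x hx.1
      have h2 := habsW j x (Ioo_subset_Icc_self hx)
      have h3 := habsQ j x (Ioo_subset_Icc_self hx)
      have h4 := habsQ (j+1) x (Ioo_subset_Icc_self hx)
      have e1 : 0 ≤ α * (CT - W j x) := mul_nonneg hα.le (by linarith)
      have e2 : 0 ≤ β * (Q j x + CT) := mul_nonneg hβ.le (by linarith)
      have e3 : 0 ≤ β * (Q (j+1) x + CT) := mul_nonneg hβ.le (by linarith)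
      have e4 : 0 ≤ C * CT := mul_nonneg hC0 hCT0
      rw [hMdef]
      nlinarith
    have hcrQ : ∀ j, ∀ x ∈ Ioo (0:ℝ) T, -M ≤ deriv (Q j) x := by
      intro j x hx
      have h1 := hineqQ j x hx.1
      have h2 := habsQ j x (Ioo_subset_Icc_self hx)
      have h3 := habsW j x (Ioo_subset_Icc_self hx)
      have h4 := habsW (j-1) x (Ioo_subset_Icc_self hx)
      have habsc := abs_le.mp (hC x hx.1 j)
      have e1 : 0 ≤ (C + c j x) * (CT + Q j x) := mul_nonneg (by linarith) (by linarith)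
      have e2 : 0 ≤ (C - c j x) * (CT - Q j x) := mul_nonneg (by linarith) (by linarith)
      have e3 : 0 ≤ α * (W j x + CT) := mul_nonneg hα.le (by linarith)
      have e4 : 0 ≤ α * (W (j-1) x + CT) := mul_nonneg hα.le (by linarith)
      have e5 : 0 ≤ β * CT := mul_nonneg hβ.le hCT0
      rw [hMdef]
      nlinarith
    set K : ℝ := 2*α + 2*β + C + 1 with hKdef
    have hK0 : (0:ℝ) ≤ K := by rw [hKdef]; linarith
    -- the barrier claim
    have claim : ∀ ε : ℝ, 0 < ε → ∀ j, ∀ s ∈ Icc (0:ℝ) T,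
        -(ε * Real.exp (K * s)) ≤ W j s ∧ -(ε * Real.exp (K * s)) ≤ Q j s := by
      intro ε hε
      by_contra hcon
      push_neg at hcon
      set S : Set ℝ := {s | s ∈ Icc (0:ℝ) T ∧
        ∃ j, W j s < -(ε * Real.exp (K * s)) ∨ Q j s < -(ε * Real.exp (K * s))} with hSdef
      have hSne : S.Nonempty := by
        obtain ⟨j, s, hsmem, hw⟩ := hcon
        by_cases hA : -(ε * Real.exp (K * s)) ≤ W j s
        · exact ⟨s, hsmem, j, Or.inr (hw hA)⟩
        · exact ⟨s, hsmem, j, Or.inl (not_le.mp hA)⟩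
      have hbdd : BddBelow S := ⟨0, fun s hs => hs.1.1⟩
      set t₀ : ℝ := sInf S with ht₀def
      have ht₀0 : 0 ≤ t₀ := le_csInf hSne (fun s hs => hs.1.1)
      have ht₀le : ∀ s ∈ S, t₀ ≤ s := fun s hs => csInf_le hbdd hs
      obtain ⟨s₀, hs₀⟩ := hSne
      have ht₀T : t₀ ≤ T := le_trans (ht₀le s₀ hs₀) hs₀.1.2
      have hbarc : Continuous fun r : ℝ => ε * Real.exp (K * r) :=
        continuous_const.mul (Real.continuous_exp.comp (continuous_const.mul continuous_id))
      have ht₀notS : t₀ ∉ S := by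
        intro hsS
        obtain ⟨hmem', j', hor⟩ := hsS
        have ht₀pos : 0 < t₀ := by
          rcases lt_or_eq_of_le ht₀0 with h | h
          · exact h
          · exfalso
            rcases hor with h2 | h2 <;> rw [← h] at h2 <;>
              simp only [mul_zero, Real.exp_zero, mul_one] at h2
            · linarith [(hinit j').1]
            · linarith [(hinit j').2]
        rcases hor with h2 | h2
        · have hcu : ContinuousAt (fun r => W j' r + ε * Real.exp (K * r)) t₀ :=
            ((hWd j' t₀ ht₀pos).continuousAt).add hbarc.continuousAt
          have hval : W j' t₀ + ε * Real.exp (K * t₀) < 0 := by linarith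
          have hev : {r | W j' r + ε * Real.exp (K * r) < 0} ∈ 𝓝 t₀ := hcu (Iio_mem_nhds hval)
          have hev' : ∀ᶠ r in 𝓝[<] t₀, W j' r + ε * Real.exp (K * r) < 0 :=
            mem_nhdsWithin_of_mem_nhds hev
          have hev2 : ∀ᶠ r in 𝓝[<] t₀, r ∈ Ioo (0:ℝ) t₀ :=
            Ioo_mem_nhdsLT_of_mem ⟨ht₀pos, le_rfl⟩
          obtain ⟨r, hr1, hr2⟩ := (hev'.and hev2).exists
          have hr1' : W j' r + ε * Real.exp (K * r) < 0 := hr1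
          have hrS : r ∈ S :=
            ⟨⟨hr2.1.le, le_trans hr2.2.le ht₀T⟩, j', Or.inl (by linarith)⟩
          exact absurd (ht₀le r hrS) (not_le.mpr hr2.2)
        · have hcu : ContinuousAt (fun r => Q j' r + ε * Real.exp (K * r)) t₀ :=
            ((hQd j' t₀ ht₀pos).continuousAt).add hbarc.continuousAt
          have hval : Q j' t₀ + ε * Real.exp (K * t₀) < 0 := by linarith
          have hev : {r | Q j' r + ε * Real.exp (K * r) < 0} ∈ 𝓝 t₀ := hcu (Iio_mem_nhds hval)
          have hev' : ∀ᶠ r in 𝓝[<] t₀, Q j' r + ε * Real.exp (K * r) < 0 :=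
            mem_nhdsWithin_of_mem_nhds hev
          have hev2 : ∀ᶠ r in 𝓝[<] t₀, r ∈ Ioo (0:ℝ) t₀ :=
            Ioo_mem_nhdsLT_of_mem ⟨ht₀pos, le_rfl⟩
          obtain ⟨r, hr1, hr2⟩ := (hev'.and hev2).exists
          have hr1' : Q j' r + ε * Real.exp (K * r) < 0 := hr1
          have hrS : r ∈ S :=
            ⟨⟨hr2.1.le, le_trans hr2.2.le ht₀T⟩, j', Or.inr (by linarith)⟩
          exact absurd (ht₀le r hrS) (not_le.mpr hr2.2)
      have hbar : ∀ s, 0 ≤ s → s ≤ t₀ → ∀ j,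
          -(ε * Real.exp (K * s)) ≤ W j s ∧ -(ε * Real.exp (K * s)) ≤ Q j s := by
        intro s hs0 hst j
        by_contra hcon2
        rw [not_and_or] at hcon2
        have hsmem : s ∈ Icc (0:ℝ) T := ⟨hs0, hst.trans ht₀T⟩
        have hsS : s ∈ S := by
          rcases hcon2 with h | h
          · exact ⟨hsmem, j, Or.inl (not_le.mp h)⟩
          · exact ⟨hsmem, j, Or.inr (not_le.mp h)⟩
        rcases eq_or_lt_of_le hst with h | h
        · exact ht₀notS (h ▸ hsS)
        · exact absurd (ht₀le s hsS) (not_le.mpr h)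
      set δ : ℝ := ε / ((2*α + 2*β + C) * (M + 1) + 1) with hδdef
      have hden : (0:ℝ) < (2*α + 2*β + C) * (M + 1) + 1 := by
        have h9 : (0:ℝ) ≤ (2*α + 2*β + C) * (M + 1) := mul_nonneg (by linarith) (by linarith)
        linarith
      have hδ0 : 0 < δ := div_pos hε hden
      have hDδ : ((2*α + 2*β + C) * (M + 1) + 1) * δ = ε := by
        rw [hδdef]; field_simp
      obtain ⟨t₁, ht₁S, ht₁lt⟩ := (csInf_lt_iff hbdd ⟨s₀, hs₀⟩).mp
        (show sInf S < t₀ + δ by rw [← ht₀def]; linarith)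
      have ht₀t₁ : t₀ ≤ t₁ := ht₀le t₁ ht₁S
      obtain ⟨ht₁mem, j₁, hor₁⟩ := ht₁S
      have hlow : ∀ j, ∀ x ∈ Icc t₀ t₁,
          (-(ε * Real.exp (K * x)) - M * δ ≤ W j x) ∧
          (-(ε * Real.exp (K * x)) - M * δ ≤ Q j x) := by
        intro j x hx
        have hx0 : 0 ≤ x := le_trans ht₀0 hx.1
        have hxT : x ≤ T := le_trans hx.2 ht₁mem.2
        have hsub : Icc (0:ℝ) T ⊆ Ici 0 := fun y hy => hy.1
        have hexp : Real.exp (K * t₀) ≤ Real.exp (K * x) :=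
          Real.exp_le_exp.mpr (mul_le_mul_of_nonneg_left hx.1 hK0)
        have hxd : x - t₀ ≤ δ := by
          have := hx.2
          linarith
        have he1 : 0 ≤ ε * (Real.exp (K * x) - Real.exp (K * t₀)) :=
          mul_nonneg hε.le (by linarith)
        have he2 : 0 ≤ M * (δ - (x - t₀)) := mul_nonneg hM0 (by linarith)
        constructor
        · have hmono : MonotoneOn (fun s => W j s + M * s) (Icc 0 T) := by
            apply myMono (f' := fun y => deriv (W j) y + M)
            · exact ((hWc j).mono hsub).add (continuous_const.mul continuous_id).continuousOn
            · intro y hy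
              exact ((hWd j y hy.1).add ((hasDerivAt_id y).const_mul M)).congr_deriv (by simp)
            · intro y hy
              have := hcrW j y hy
              linarith
          have h1 : W j t₀ + M * t₀ ≤ W j x + M * x :=
            hmono ⟨ht₀0, ht₀T⟩ ⟨hx0, hxT⟩ hx.1
          have h2 := (hbar t₀ ht₀0 le_rfl j).1
          linarith
        · have hmono : MonotoneOn (fun s => Q j s + M * s) (Icc 0 T) := by
            apply myMono (f' := fun y => deriv (Q j) y + M)
            · exact ((hQc j).mono hsub).add (continuous_const.mul continuous_id).continuousOn
            · intro y hy
              exact ((hQd j y hy.1).add ((hasDerivAt_id y).const_mul M)).congr_deriv (by simp)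
            · intro y hy
              have := hcrQ j y hy
              linarith
          have h1 : Q j t₀ + M * t₀ ≤ Q j x + M * x :=
            hmono ⟨ht₀0, ht₀T⟩ ⟨hx0, hxT⟩ hx.1
          have h2 := (hbar t₀ ht₀0 le_rfl j).2
          linarith
      rcases hor₁ with hv | hv
      · -- W-crossing
        have hfc : ContinuousOn (fun s => W j₁ s + ε * Real.exp (K * s)) (Icc t₀ t₁) :=
          ((hWc j₁).mono (fun y hy => le_trans ht₀0 hy.1)).add hbarc.continuousOn
        set A : Set ℝ :=
          Icc t₀ t₁ ∩ (fun s => W j₁ s + ε * Real.exp (K * s)) ⁻¹' (Ici 0) with hAdef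
        have hAcl : IsClosed A := hfc.preimage_isClosed_of_isClosed isClosed_Icc isClosed_Ici
        have hAne : A.Nonempty := by
          refine ⟨t₀, ⟨le_rfl, ht₀t₁⟩, ?_⟩
          have h2 := (hbar t₀ ht₀0 le_rfl j₁).1
          simp only [mem_preimage, mem_Ici]
          linarith
        have hAbdd : BddAbove A := ⟨t₁, fun y hy => hy.1.2⟩
        have hs₁A : sSup A ∈ A := hAcl.csSup_mem hAne hAbdd
        set s₁ : ℝ := sSup A with hs₁def
        have hfs₁ : 0 ≤ W j₁ s₁ + ε * Real.exp (K * s₁) := hs₁A.2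
        have hs₁t₀ : t₀ ≤ s₁ := hs₁A.1.1
        have hs₁t₁ : s₁ ≤ t₁ := hs₁A.1.2
        have hft₁ : W j₁ t₁ + ε * Real.exp (K * t₁) < 0 := by linarith
        have hs₁lt : s₁ < t₁ := lt_of_le_of_ne hs₁t₁ (by
          intro h
          rw [h] at hfs₁
          linarith)
        have hafter : ∀ y, s₁ < y → y ≤ t₁ → W j₁ y + ε * Real.exp (K * y) < 0 := by
          intro y h1 h2
          by_contra h3
          push_neg at h3
          have hyA : y ∈ A := ⟨⟨le_trans hs₁t₀ h1.le, h2⟩, h3⟩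
          exact absurd (le_csSup hAbdd hyA) (not_le.mpr h1)
        have h51 : 2*β*M ≤ (2*α + 2*β + C) * (M + 1) := by
          nlinarith [mul_nonneg hα.le hM0, mul_nonneg hC0 hM0]
        have h5 : 2*β*M*δ + δ ≤ ε := by
          have h9 := mul_le_mul_of_nonneg_right h51 hδ0.le
          linarith
        have hsm : StrictMonoOn (fun s => W j₁ s + ε * Real.exp (K * s)) (Icc s₁ t₁) := by
          apply myStrictMono (f' := fun x => deriv (W j₁) x + ε * (K * Real.exp (K * x)))
          · exact hfc.mono (Icc_subset_Icc hs₁t₀ le_rfl)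
          · intro x hx
            have hx0 : 0 < x := lt_of_le_of_lt (le_trans ht₀0 hs₁t₀) hx.1
            exact (hWd j₁ x hx0).add ((expDeriv K x).const_mul ε)
          · intro x hx
            have hx0 : 0 < x := lt_of_le_of_lt (le_trans ht₀0 hs₁t₀) hx.1
            have hxI : x ∈ Icc t₀ t₁ := ⟨le_trans hs₁t₀ hx.1.le, hx.2.le⟩
            have h1 := hineqW j₁ x hx0
            have h2 : W j₁ x < -(ε * Real.exp (K * x)) := by
              have := hafter x hx.1 hx.2.le
              linarith
            have h3 := (hlow j₁ x hxI).2
            have h4 := (hlow (j₁+1) x hxI).2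
            have hex1 : 1 ≤ Real.exp (K * x) := by
              have h0 : Real.exp 0 ≤ Real.exp (K * x) :=
                Real.exp_le_exp.mpr (mul_nonneg hK0 hx0.le)
              simpa using h0
            have hKe : ε * (K * Real.exp (K * x)) =
                2*α*(ε * Real.exp (K * x)) + 2*β*(ε * Real.exp (K * x)) +
                C*(ε * Real.exp (K * x)) + ε * Real.exp (K * x) := by
              rw [hKdef]; ring
            have hintα : 0 < α * (-(ε * Real.exp (K * x)) - W j₁ x) :=
              mul_pos hα (by linarith)
            have hintβ1 : 0 ≤ β * (Q j₁ x + ε * Real.exp (K * x) + M * δ) :=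
              mul_nonneg hβ.le (by linarith)
            have hintβ2 : 0 ≤ β * (Q (j₁+1) x + ε * Real.exp (K * x) + M * δ) :=
              mul_nonneg hβ.le (by linarith)
            have hintεe : 0 ≤ ε * (Real.exp (K * x) - 1) := mul_nonneg hε.le (by linarith)
            have hintαεe : 0 ≤ α * (ε * Real.exp (K * x)) :=
              mul_nonneg hα.le (mul_nonneg hε.le (Real.exp_pos _).le)
            have hintCεe : 0 ≤ C * (ε * Real.exp (K * x)) :=
              mul_nonneg hC0 (mul_nonneg hε.le (Real.exp_pos _).le)
            linarith
        have h9 : W j₁ s₁ + ε * Real.exp (K * s₁) < W j₁ t₁ + ε * Real.exp (K * t₁) :=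
          hsm ⟨le_rfl, hs₁lt.le⟩ ⟨hs₁lt.le, le_rfl⟩ hs₁lt
        linarith
      · -- Q-crossing
        have hfc : ContinuousOn (fun s => Q j₁ s + ε * Real.exp (K * s)) (Icc t₀ t₁) :=
          ((hQc j₁).mono (fun y hy => le_trans ht₀0 hy.1)).add hbarc.continuousOn
        set A : Set ℝ :=
          Icc t₀ t₁ ∩ (fun s => Q j₁ s + ε * Real.exp (K * s)) ⁻¹' (Ici 0) with hAdef
        have hAcl : IsClosed A := hfc.preimage_isClosed_of_isClosed isClosed_Icc isClosed_Ici
        have hAne : A.Nonempty := by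
          refine ⟨t₀, ⟨le_rfl, ht₀t₁⟩, ?_⟩
          have h2 := (hbar t₀ ht₀0 le_rfl j₁).2
          simp only [mem_preimage, mem_Ici]
          linarith
        have hAbdd : BddAbove A := ⟨t₁, fun y hy => hy.1.2⟩
        have hs₁A : sSup A ∈ A := hAcl.csSup_mem hAne hAbdd
        set s₁ : ℝ := sSup A with hs₁def
        have hfs₁ : 0 ≤ Q j₁ s₁ + ε * Real.exp (K * s₁) := hs₁A.2
        have hs₁t₀ : t₀ ≤ s₁ := hs₁A.1.1
        have hs₁t₁ : s₁ ≤ t₁ := hs₁A.1.2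
        have hft₁ : Q j₁ t₁ + ε * Real.exp (K * t₁) < 0 := by linarith
        have hs₁lt : s₁ < t₁ := lt_of_le_of_ne hs₁t₁ (by
          intro h
          rw [h] at hfs₁
          linarith)
        have hafter : ∀ y, s₁ < y → y ≤ t₁ → Q j₁ y + ε * Real.exp (K * y) < 0 := by
          intro y h1 h2
          by_contra h3
          push_neg at h3
          have hyA : y ∈ A := ⟨⟨le_trans hs₁t₀ h1.le, h2⟩, h3⟩
          exact absurd (le_csSup hAbdd hyA) (not_le.mpr h1)
        have h51 : (C + 2*α)*M ≤ (2*α + 2*β + C) * (M + 1) := by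
          nlinarith [mul_nonneg hβ.le hM0, mul_nonneg hC0 hM0]
        have h5 : (C + 2*α)*M*δ + δ ≤ ε := by
          have h9 := mul_le_mul_of_nonneg_right h51 hδ0.le
          linarith
        have hsm : StrictMonoOn (fun s => Q j₁ s + ε * Real.exp (K * s)) (Icc s₁ t₁) := by
          apply myStrictMono (f' := fun x => deriv (Q j₁) x + ε * (K * Real.exp (K * x)))
          · exact hfc.mono (Icc_subset_Icc hs₁t₀ le_rfl)
          · intro x hx
            have hx0 : 0 < x := lt_of_le_of_lt (le_trans ht₀0 hs₁t₀) hx.1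
            exact (hQd j₁ x hx0).add ((expDeriv K x).const_mul ε)
          · intro x hx
            have hx0 : 0 < x := lt_of_le_of_lt (le_trans ht₀0 hs₁t₀) hx.1
            have hxI : x ∈ Icc t₀ t₁ := ⟨le_trans hs₁t₀ hx.1.le, hx.2.le⟩
            have h1 := hineqQ j₁ x hx0
            have h2 : Q j₁ x < -(ε * Real.exp (K * x)) := by
              have := hafter x hx.1 hx.2.le
              linarith
            have h3Q := (hlow j₁ x hxI).2
            have h3W := (hlow j₁ x hxI).1
            have h4W := (hlow (j₁-1) x hxI).1
            have habsc := abs_le.mp (hC x hx0 j₁)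
            have hεe : 0 < ε * Real.exp (K * x) := mul_pos hε (Real.exp_pos _)
            have hex1 : 1 ≤ Real.exp (K * x) := by
              have h0 : Real.exp 0 ≤ Real.exp (K * x) :=
                Real.exp_le_exp.mpr (mul_nonneg hK0 hx0.le)
              simpa using h0
            have hKe : ε * (K * Real.exp (K * x)) =
                2*α*(ε * Real.exp (K * x)) + 2*β*(ε * Real.exp (K * x)) +
                C*(ε * Real.exp (K * x)) + ε * Real.exp (K * x) := by
              rw [hKdef]; ring
            have hint_cq : 0 ≤ (C - c j₁ x) * (-(Q j₁ x)) :=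
              mul_nonneg (by linarith) (by linarith)
            have hint_CQ : C * (-(ε * Real.exp (K * x)) - M * δ) ≤ C * Q j₁ x :=
              mul_le_mul_of_nonneg_left h3Q hC0
            have hintαW1 : α * (-(ε * Real.exp (K * x)) - M * δ) ≤ α * W j₁ x :=
              mul_le_mul_of_nonneg_left h3W hα.le
            have hintαW2 : α * (-(ε * Real.exp (K * x)) - M * δ) ≤ α * W (j₁-1) x :=
              mul_le_mul_of_nonneg_left h4W hα.le
            have hintεe : 0 ≤ ε * (Real.exp (K * x) - 1) := mul_nonneg hε.le (by linarith)
            have hintβεe : 0 ≤ β * (ε * Real.exp (K * x)) :=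
              mul_nonneg hβ.le (mul_nonneg hε.le (Real.exp_pos _).le)
            linarith
        have h9 : Q j₁ s₁ + ε * Real.exp (K * s₁) < Q j₁ t₁ + ε * Real.exp (K * t₁) :=
          hsm ⟨le_rfl, hs₁lt.le⟩ ⟨hs₁lt.le, le_rfl⟩ hs₁lt
        linarith
    -- conclude from the claim
    intro j s hs
    constructor
    · by_contra hneg
      push_neg at hneg
      have hεp : 0 < -(W j s) / (2 * Real.exp (K * T)) :=
        div_pos (by linarith) (by positivity)
      have h1 := (claim _ hεp j s hs).1
      have h2 : Real.exp (K * s) ≤ Real.exp (K * T) :=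
        Real.exp_le_exp.mpr (mul_le_mul_of_nonneg_left hs.2 hK0)
      have h3 : (0:ℝ) < Real.exp (K * T) := Real.exp_pos _
      have h4 : (-(W j s) / (2 * Real.exp (K * T))) * Real.exp (K * s) ≤
          (-(W j s) / (2 * Real.exp (K * T))) * Real.exp (K * T) :=
        mul_le_mul_of_nonneg_left h2 hεp.le
      have h5 : (-(W j s) / (2 * Real.exp (K * T))) * Real.exp (K * T) = -(W j s) / 2 := by
        field_simp
      linarith
    · by_contra hneg
      push_neg at hneg
      have hεp : 0 < -(Q j s) / (2 * Real.exp (K * T)) :=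
        div_pos (by linarith) (by positivity)
      have h1 := (claim _ hεp j s hs).2
      have h2 : Real.exp (K * s) ≤ Real.exp (K * T) :=
        Real.exp_le_exp.mpr (mul_le_mul_of_nonneg_left hs.2 hK0)
      have h3 : (0:ℝ) < Real.exp (K * T) := Real.exp_pos _
      have h4 : (-(Q j s) / (2 * Real.exp (K * T))) * Real.exp (K * s) ≤
          (-(Q j s) / (2 * Real.exp (K * T))) * Real.exp (K * T) :=
        mul_le_mul_of_nonneg_left h2 hεp.le
      have h5 : (-(Q j s) / (2 * Real.exp (K * T))) * Real.exp (K * T) = -(Q j s) / 2 := by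
        field_simp
      linarith
  have key1 : ∀ j (t : ℝ), 0 ≤ t → 0 ≤ W j t ∧ 0 ≤ Q j t := by
    intro j t ht
    rcases eq_or_lt_of_le ht with h | h
    · exact h ▸ hinit j
    · exact keyT t h j t ⟨ht, le_rfl⟩
  refine ⟨fun j t ht => key1 j t ht.le, ?_⟩
  intro hne
  have hsubW : ∀ (a t : ℝ), 0 ≤ a → ∀ j, ContinuousOn (W j) (Icc a t) :=
    fun a t ha j => (hWc j).mono (fun y hy => le_trans ha hy.1)
  have hsubQ : ∀ (a t : ℝ), 0 ≤ a → ∀ j, ContinuousOn (Q j) (Icc a t) :=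
    fun a t ha j => (hQc j).mono (fun y hy => le_trans ha hy.1)
  -- step A : W j positive on (0,∞) forces Q j and Q (j+1) positive
  have stepA : ∀ j : ℤ, (∀ t : ℝ, 0 < t → 0 < W j t) →
      (∀ t : ℝ, 0 < t → 0 < Q j t) ∧ (∀ t : ℝ, 0 < t → 0 < Q (j+1) t) := by
    intro j hWj
    constructor
    · intro t ht
      apply pos_of_exp_mono (k := C) (a := t/2) (by linarith)
        (hsubQ _ _ (by linarith) j) (fun x hx => hQd j x (by cases hx; linarith))
      · intro x hx
        have hx0 : 0 < x := by cases hx; linarith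
        have h1 := hineqQ j x hx0
        have h2 := abs_le.mp (hC x hx0 j)
        have h3 := (key1 j x hx0.le).2
        have h4 := (key1 (j-1) x hx0.le).1
        have h5 := hWj x hx0
        have e1 : 0 ≤ (C + c j x) * Q j x := mul_nonneg (by linarith) h3
        have e2 : 0 < α * W j x := mul_pos hα h5
        have e3 : 0 ≤ α * W (j-1) x := mul_nonneg hα.le h4
        nlinarith
      · exact (key1 j (t/2) (by linarith)).2
    · intro t ht
      apply pos_of_exp_mono (k := C) (a := t/2) (by linarith)
        (hsubQ _ _ (by linarith) (j+1)) (fun x hx => hQd (j+1) x (by cases hx; linarith))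
      · intro x hx
        have hx0 : 0 < x := by cases hx; linarith
        have h1 := hineqQ (j+1) x hx0
        rw [show j + 1 - 1 = j from by ring] at h1
        have h2 := abs_le.mp (hC x hx0 (j+1))
        have h3 := (key1 (j+1) x hx0.le).2
        have h4 := (key1 (j+1) x hx0.le).1
        have h5 := hWj x hx0
        have e1 : 0 ≤ (C + c (j+1) x) * Q (j+1) x := mul_nonneg (by linarith) h3
        have e2 : 0 < α * W j x := mul_pos hα h5
        have e3 : 0 ≤ α * W (j+1) x := mul_nonneg hα.le h4
        nlinarith
      · exact (key1 (j+1) (t/2) (by linarith)).2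
  -- step B : Q j positive on (0,∞) forces W j and W (j-1) positive
  have stepB : ∀ j : ℤ, (∀ t : ℝ, 0 < t → 0 < Q j t) →
      (∀ t : ℝ, 0 < t → 0 < W j t) ∧ (∀ t : ℝ, 0 < t → 0 < W (j-1) t) := by
    intro j hQj
    constructor
    · intro t ht
      apply pos_of_exp_mono (k := 2*α) (a := t/2) (by linarith)
        (hsubW _ _ (by linarith) j) (fun x hx => hWd j x (by cases hx; linarith))
      · intro x hx
        have hx0 : 0 < x := by cases hx; linarith
        have h1 := hineqW j x hx0
        have h3 := (key1 (j+1) x hx0.le).2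
        have h5 := hQj x hx0
        have e1 : 0 < β * Q j x := mul_pos hβ h5
        have e2 : 0 ≤ β * Q (j+1) x := mul_nonneg hβ.le h3
        nlinarith
      · exact (key1 j (t/2) (by linarith)).1
    · intro t ht
      apply pos_of_exp_mono (k := 2*α) (a := t/2) (by linarith)
        (hsubW _ _ (by linarith) (j-1)) (fun x hx => hWd (j-1) x (by cases hx; linarith))
      · intro x hx
        have hx0 : 0 < x := by cases hx; linarith
        have h1 := hineqW (j-1) x hx0
        rw [show j - 1 + 1 = j from by ring] at h1
        have h3 := (key1 (j-1) x hx0.le).2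
        have h5 := hQj x hx0
        have e1 : 0 < β * Q j x := mul_pos hβ h5
        have e2 : 0 ≤ β * Q (j-1) x := mul_nonneg hβ.le h3
        nlinarith
      · exact (key1 (j-1) (t/2) (by linarith)).1
  -- base index
  have hbase : ∃ j₀ : ℤ, (∀ t : ℝ, 0 < t → 0 < W j₀ t) ∧ (∀ t : ℝ, 0 < t → 0 < Q j₀ t) := by
    rcases hne with ⟨j₀, hj₀⟩ | ⟨j₀, hj₀⟩
    · have hW0 : 0 < W j₀ 0 := lt_of_le_of_ne (hinit j₀).1 (Ne.symm hj₀)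
      have hWp : ∀ t : ℝ, 0 < t → 0 < W j₀ t := by
        intro t ht
        apply pos_of_exp_mono' (k := 2*α) (a := 0) ht.le
          (hsubW _ _ le_rfl j₀) (fun x hx => hWd j₀ x hx.1)
        · intro x hx
          have hx0 : 0 < x := hx.1
          have h1 := hineqW j₀ x hx0
          have e1 : 0 ≤ β * Q j₀ x := mul_nonneg hβ.le (key1 j₀ x hx0.le).2
          have e2 : 0 ≤ β * Q (j₀+1) x := mul_nonneg hβ.le (key1 (j₀+1) x hx0.le).2
          nlinarith
        · exact hW0
      exact ⟨j₀, hWp, (stepA j₀ hWp).1⟩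
    · have hQ0 : 0 < Q j₀ 0 := lt_of_le_of_ne (hinit j₀).2 (Ne.symm hj₀)
      have hQp : ∀ t : ℝ, 0 < t → 0 < Q j₀ t := by
        intro t ht
        apply pos_of_exp_mono' (k := C) (a := 0) ht.le
          (hsubQ _ _ le_rfl j₀) (fun x hx => hQd j₀ x hx.1)
        · intro x hx
          have hx0 : 0 < x := hx.1
          have h1 := hineqQ j₀ x hx0
          have h2 := abs_le.mp (hC x hx0 j₀)
          have e1 : 0 ≤ (C + c j₀ x) * Q j₀ x :=
            mul_nonneg (by linarith) (key1 j₀ x hx0.le).2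
          have e2 : 0 ≤ α * W j₀ x := mul_nonneg hα.le (key1 j₀ x hx0.le).1
          have e3 : 0 ≤ α * W (j₀-1) x := mul_nonneg hα.le (key1 (j₀-1) x hx0.le).1
          nlinarith
        · exact hQ0
      exact ⟨j₀, (stepB j₀ hQp).1, hQp⟩
  obtain ⟨j₀, hbW, hbQ⟩ := hbase
  have main : ∀ k : ℤ,
      (∀ t : ℝ, 0 < t → 0 < W (j₀ + k) t) ∧ (∀ t : ℝ, 0 < t → 0 < Q (j₀ + k) t) := by
    intro k
    induction k using Int.induction_on with
    | zero => simpa using ⟨hbW, hbQ⟩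
    | succ n ih =>
      have hq := (stepA (j₀ + n) ih.1).2
      have hw := (stepB ((j₀ + n) + 1) hq).1
      have e : j₀ + ((n : ℤ) + 1) = (j₀ + n) + 1 := by ring
      rw [e]
      exact ⟨hw, hq⟩
    | pred n ih =>
      have hw := (stepB (j₀ + -(n : ℤ)) ih.2).2
      have hq := (stepA ((j₀ + -(n : ℤ)) - 1) hw).1
      have e : j₀ + (-(n : ℤ) - 1) = (j₀ + -(n : ℤ)) - 1 := by ring
      rw [e]
      exact ⟨hw, hq⟩
  intro j t ht
  have h := main (j - j₀)
  rw [show j₀ + (j - j₀) = j from by ring] at h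
  exact ⟨h.1 t ht, h.2 t ht⟩
end
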